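/- Let (Q, t, f, s) be a state machine over G with induced map n. Then n is delaying if and only if for every reachable state r ∈ Q, the state output map g ↦ f(r, g) is a constant function (i.e., the state machine is a Moore machine on its reachable states). -/
import Mathlib


/-- The state sequence of a state machine with transition map `t` and start state `s`
on input sequence `x`: `q 0 = s` and `q (i+1) = t (q i) (x i)`. -/
def smState {G Q : Type*} (t : Q → G → Q) (s : Q) (x : ℕ → G) : ℕ → Q
  | 0 => s
  | i + 1 => t (smState t s x i) (x i)

/-- The map on sequences induced by the state machine `(Q, t, f, s)`. -/
def smMap {G Q : Type*} (t : Q → G → Q) (f : Q → G → G) (s : Q) :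
    (ℕ → G) → (ℕ → G) :=
  fun x i => f (smState t s x i) (x i)

/-- A map on sequences over `G` is delaying if inputs agreeing on all positions `< k`
produce outputs agreeing on all positions `≤ k`. -/
def Delaying {G : Type*} [AddGroup G] (n : (ℕ → G) → (ℕ → G)) : Prop :=
  ∀ k : ℕ, ∀ x y : ℕ → G, (∀ i < k, x i = y i) → ∀ i ≤ k, n x i = n y i

/-- A state `r` is reachable if it occurs in the state sequence induced by
some input sequence. -/
def Reachable {G Q : Type*} (t : Q → G → Q) (s : Q) (r : Q) : Prop :=
  ∃ (x : ℕ → G) (i : ℕ), smState t s x i = r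


lemma smState_congr {G Q : Type*} (t : Q → G → Q) (s : Q) (x y : ℕ → G) (k : ℕ)
    (h : ∀ i < k, x i = y i) : smState t s x k = smState t s y k := by
  induction k with
  | zero => rfl
  | succ n ih =>
    simp only [smState]
    rw [ih (fun i hi => h i (Nat.lt_succ_of_lt hi)), h n (Nat.lt_succ_self n)]

/-- The map induced by a state machine is delaying iff the state output map of every
reachable state is constant, i.e. iff the machine is a Moore machine on its
reachable states. -/
theorem smMap_delaying_iff_moore {G Q : Type*} [AddGroup G]
    (t : Q → G → Q) (f : Q → G → G) (s : Q) :
    Delaying (smMap t f s) ↔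
      ∀ r : Q, Reachable t s r → ∀ g₁ g₂ : G, f r g₁ = f r g₂ := by
  constructor
  · rintro hd r ⟨x, i, hx⟩ g₁ g₂
    have h := hd i (Function.update x i g₁) (Function.update x i g₂)
      (fun j hj => by simp [Function.update_apply, Nat.ne_of_lt hj]) i le_rfl
    simp only [smMap] at h
    rw [smState_congr t s (Function.update x i g₁) x i
          (fun j hj => Function.update_of_ne (Nat.ne_of_lt hj) _ _),
        smState_congr t s (Function.update x i g₂) x i
          (fun j hj => Function.update_of_ne (Nat.ne_of_lt hj) _ _),
        hx, Function.update_self, Function.update_self] at h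
    exact h
  · intro hm k x y hxy i hi
    have hs : smState t s x i = smState t s y i :=
      smState_congr t s x y i (fun j hj => hxy j (lt_of_lt_of_le hj hi))
    simp only [smMap]
    rcases lt_or_eq_of_le hi with h | h
    · rw [hs, hxy i h]
    · rw [hs]
      exact hm _ ⟨y, i, rfl⟩ _ _
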